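/- arXiv:1203.5436 — 2 statements merged into one kernel-verified Lean document; each statement's English description precedes it below -/
import Mathlib

section
/- Every quasimorphism on ℝ (equivalently, on any abelian group A) decomposes as the sum of a group homomorphism to ℝ and a bounded function. Formally: if A is an abelian group and φ : A → ℝ satisfies sup_{a,b} |φ(ab) - φ(a) - φ(b)| < ∞, then there exists a homomorphism h : A → ℝ with sup_{a} |φ(a) - h(a)| < ∞. -/
open Filter Topology

/-- Every quasimorphism on an abelian group is a homomorphism plus a bounded
function. -/
theorem quasimorphism_on_abelian {A : Type*} [CommGroup A] (φ : A → ℝ)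
    (hφ : ∃ D : ℝ, ∀ a b : A, |φ (a * b) - φ a - φ b| ≤ D) :
    ∃ h : A → ℝ, (∀ a b : A, h (a * b) = h a + h b) ∧
      ∃ C : ℝ, ∀ a : A, |φ a - h a| ≤ C := by
  obtain ⟨D, hD⟩ := hφ
  have hD0 : 0 ≤ D := le_trans (abs_nonneg _) (hD 1 1)
  -- the subadditive sequences
  have hsub : ∀ a : A, Subadditive (fun n : ℕ => φ (a ^ n) + D) := by
    intro a m n
    have h1 := hD (a ^ m) (a ^ n)
    rw [← pow_add] at h1
    have h2 := abs_le.1 h1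
    simp only []
    linarith [h2.2]
  -- lower bound for φ (a ^ n)
  have hlow : ∀ (a : A) (n : ℕ), (n : ℝ) * (φ a - D) + (φ 1 - D) ≤ φ (a ^ n) := by
    intro a n
    induction n with
    | zero => simp; linarith
    | succ n ih =>
      have h1 := (abs_le.1 (hD (a ^ n) a)).1
      rw [← pow_succ] at h1
      push_cast
      nlinarith
  have hbdd : ∀ a : A, BddBelow (Set.range fun n : ℕ => (φ (a ^ n) + D) / n) := by
    intro a
    refine ⟨min 0 (φ a - D - |φ 1| - D), ?_⟩
    rintro x ⟨n, rfl⟩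
    rcases Nat.eq_zero_or_pos n with rfl | hn
    · simp
    refine le_trans (min_le_right _ _) ?_
    have hn1 : (1 : ℝ) ≤ (n : ℝ) := by exact_mod_cast hn
    have hnpos : (0 : ℝ) < n := by linarith
    rw [le_div_iff₀ hnpos]
    have h3 := hlow a n
    have h1 : -|φ 1| ≤ φ 1 := neg_abs_le _
    nlinarith [abs_nonneg (φ 1)]
  set h : A → ℝ := fun a => (hsub a).lim with hh
  have hts : ∀ a : A, Tendsto (fun n : ℕ => φ (a ^ n) / n) atTop (𝓝 (h a)) := by
    intro a
    have h1 := (hsub a).tendsto_lim (hbdd a)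
    have hz : Tendsto (fun n : ℕ => D / n) atTop (𝓝 0) :=
      tendsto_const_div_atTop_nhds_zero_nat D
    have h2 := h1.sub hz
    rw [sub_zero] at h2
    refine h2.congr' ?_
    filter_upwards [eventually_ne_atTop 0] with n hn
    have : (n : ℝ) ≠ 0 := Nat.cast_ne_zero.2 hn
    field_simp
    ring
  refine ⟨h, ?_, ?_⟩
  · -- additivity
    intro a b
    have t1 : Tendsto (fun n : ℕ =>
        φ ((a * b) ^ n) / n - (φ (a ^ n) / n + φ (b ^ n) / n)) atTop
        (𝓝 (h (a * b) - (h a + h b))) := (hts (a * b)).sub ((hts a).add (hts b))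
    have t2 : Tendsto (fun n : ℕ =>
        φ ((a * b) ^ n) / n - (φ (a ^ n) / n + φ (b ^ n) / n)) atTop (𝓝 0) := by
      have hz : Tendsto (fun n : ℕ => D / n) atTop (𝓝 0) :=
        tendsto_const_div_atTop_nhds_zero_nat D
      refine squeeze_zero_norm ?_ hz
      intro n
      rcases Nat.eq_zero_or_pos n with rfl | hn
      · simp [hD0]
      have hnpos : (0 : ℝ) < n := by exact_mod_cast hn
      have h1 := hD (a ^ n) (b ^ n)
      rw [← mul_pow] at h1
      rw [Real.norm_eq_abs]
      have heq : φ ((a * b) ^ n) / n - (φ (a ^ n) / n + φ (b ^ n) / n)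
          = (φ ((a * b) ^ n) - φ (a ^ n) - φ (b ^ n)) / n := by ring
      rw [heq, abs_div, abs_of_pos hnpos]
      exact div_le_div_of_nonneg_right h1 hnpos.le
    have h4 := tendsto_nhds_unique t1 t2
    linarith [h4]
  · -- boundedness
    refine ⟨D, fun a => ?_⟩
    have key : ∀ n : ℕ, |φ (a ^ n) - n * φ a| ≤ n * D + |φ 1| := by
      intro n
      induction n with
      | zero => simp
      | succ n ih =>
        have h1 := hD (a ^ n) a
        rw [← pow_succ] at h1
        push_cast
        calc |φ (a ^ (n + 1)) - ((n : ℝ) + 1) * φ a|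
            = |(φ (a ^ (n + 1)) - φ (a ^ n) - φ a) + (φ (a ^ n) - n * φ a)| := by ring_nf
          _ ≤ |φ (a ^ (n + 1)) - φ (a ^ n) - φ a| + |φ (a ^ n) - n * φ a| := abs_add_le _ _
          _ ≤ D + (n * D + |φ 1|) := add_le_add h1 ih
          _ = ((n : ℝ) + 1) * D + |φ 1| := by ring
    have t1 : Tendsto (fun n : ℕ => |φ a - φ (a ^ n) / n|) atTop (𝓝 |φ a - h a|) :=
      ((tendsto_const_nhds.sub (hts a)).abs)
    have t2 : Tendsto (fun n : ℕ => D + |φ 1| / n) atTop (𝓝 D) := by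
      have hz : Tendsto (fun n : ℕ => |φ 1| / n) atTop (𝓝 0) :=
        tendsto_const_div_atTop_nhds_zero_nat _
      simpa using tendsto_const_nhds.add hz
    refine le_of_tendsto_of_tendsto t1 t2 ?_
    filter_upwards [eventually_gt_atTop 0] with n hn
    have hnpos : (0 : ℝ) < n := by exact_mod_cast hn
    have hne : (n : ℝ) ≠ 0 := ne_of_gt hnpos
    have heq : φ a - φ (a ^ n) / n = -((φ (a ^ n) - n * φ a) / n) := by
      field_simp
      ring
    rw [heq, abs_neg, abs_div, abs_of_pos hnpos, div_le_iff₀ hnpos]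
    calc |φ (a ^ n) - n * φ a| ≤ n * D + |φ 1| := key n
      _ = (D + |φ 1| / n) * n := by field_simp
end

section
/- Let G be a group, φ : G → ℝ a homogeneous quasimorphism with defect D(φ) > 0, and g ∈ [G,G]. Then |φ(g)| ≤ 2·D(φ)·cl_G(g), where cl_G(g) is the commutator length of g. Consequently |φ(g)| ≤ 2·D(φ)·scl_G(g) after stabilization: |φ(g)| ≤ 2·D(φ)·lim_{n} cl_G(gⁿ)/n. -/
open Filter
open scoped commutatorElement

/-- The commutator length of `g`: the least `n` such that `g` is a product of
`n` commutators (with the convention `sInf ∅ = 0`). -/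
noncomputable def clength {G : Type*} [Group G] (g : G) : ℕ :=
  sInf {n : ℕ | ∃ a b : Fin n → G, g = (List.ofFn (fun i => ⁅a i, b i⁆)).prod}

section Aux
variable {G : Type*} [Group G] (φ : G → ℝ) (D : ℝ)

lemma phi_one (hhom : ∀ (g : G) (n : ℤ), φ (g ^ n) = n * φ g) : φ 1 = 0 := by
  have := hhom 1 0; simpa using this

lemma phi_inv (hhom : ∀ (g : G) (n : ℤ), φ (g ^ n) = n * φ g) (x : G) :
    φ x⁻¹ = -φ x := by
  have := hhom x (-1); simpa using this

lemma phi_conj (hpos : 0 < D)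
    (hD : ∀ f g : G, |φ (f * g) - φ f - φ g| ≤ D)
    (hhom : ∀ (g : G) (n : ℤ), φ (g ^ n) = n * φ g)
    (h x : G) : φ (h * x * h⁻¹) = φ x := by
  have key : ∀ y : G, |φ (h * y * h⁻¹) - φ y| ≤ 2 * D := by
    intro y
    have h1 := hD (h * y) h⁻¹
    have h2 := hD h y
    have h3 : φ h⁻¹ = -φ h := phi_inv φ hhom h
    rw [h3] at h1
    calc |φ (h * y * h⁻¹) - φ y|
        = |(φ (h * y * h⁻¹) - φ (h * y) - -φ h) + (φ (h * y) - φ h - φ y)| := by ring_nf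
      _ ≤ _ + _ := abs_add_le _ _
      _ ≤ D + D := add_le_add h1 h2
      _ = 2 * D := by ring
  by_contra hne
  have hc : 0 < |φ (h * x * h⁻¹) - φ x| := abs_pos.mpr (sub_ne_zero.mpr hne)
  obtain ⟨n, hn⟩ := exists_nat_gt ((2 * D) / |φ (h * x * h⁻¹) - φ x|)
  have hn' : (2 * D) / |φ (h * x * h⁻¹) - φ x| < n := hn
  have hkey := key (x ^ n)
  have e1 : φ (h * x ^ n * h⁻¹) = n * φ (h * x * h⁻¹) := by
    have : (h * x * h⁻¹) ^ n = h * x ^ n * h⁻¹ := conj_pow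
    rw [← this]
    have := hhom (h * x * h⁻¹) n
    simpa using this
  have e2 : φ (x ^ n) = n * φ x := by have := hhom x n; simpa using this
  rw [e1, e2, ← mul_sub, abs_mul, Nat.abs_cast] at hkey
  have : (2 * D) / |φ (h * x * h⁻¹) - φ x| < n → False := by
    intro hlt
    have := (div_lt_iff₀ hc).mp hlt
    linarith
  exact this hn'

lemma phi_comm (hpos : 0 < D)
    (hD : ∀ f g : G, |φ (f * g) - φ f - φ g| ≤ D)
    (hhom : ∀ (g : G) (n : ℤ), φ (g ^ n) = n * φ g)
    (a b : G) : |φ ⁅a, b⁆| ≤ D := by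
  have h1 := hD (a * b * a⁻¹) b⁻¹
  have h2 : φ (a * b * a⁻¹) = φ b := phi_conj φ D hpos hD hhom a b
  have h3 : φ b⁻¹ = -φ b := phi_inv φ hhom b
  have h4 : ⁅a, b⁆ = a * b * a⁻¹ * b⁻¹ := commutatorElement_def a b
  rw [← h4, h2, h3] at h1
  calc |φ ⁅a, b⁆| = |φ ⁅a, b⁆ - φ b - -φ b| := by ring_nf
    _ ≤ D := h1

lemma phi_prod (hpos : 0 < D)
    (hD : ∀ f g : G, |φ (f * g) - φ f - φ g| ≤ D)
    (hhom : ∀ (g : G) (n : ℤ), φ (g ^ n) = n * φ g) :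
    ∀ l : List G, (∀ x ∈ l, |φ x| ≤ D) → |φ l.prod| ≤ 2 * D * l.length := by
  intro l
  induction l with
  | nil => intro _; simp [phi_one φ hhom]
  | cons a l ih =>
    intro hmem
    have ha : |φ a| ≤ D := hmem a (by simp)
    have hl : |φ l.prod| ≤ 2 * D * l.length := ih fun x hx => hmem x (by simp [hx])
    have h1 := hD a l.prod
    have : |φ (a * l.prod)| ≤ |φ a| + |φ l.prod| + D := by
      calc |φ (a * l.prod)| = |(φ (a * l.prod) - φ a - φ l.prod) + φ a + φ l.prod| := by ring_nf
        _ ≤ |φ (a * l.prod) - φ a - φ l.prod| + |φ a| + |φ l.prod| := by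
            refine le_trans (abs_add_le _ _) ?_
            gcongr
            exact abs_add_le _ _
        _ ≤ D + |φ a| + |φ l.prod| := by gcongr
        _ = |φ a| + |φ l.prod| + D := by ring
    simp only [List.prod_cons, List.length_cons]
    push_cast
    calc |φ (a * l.prod)| ≤ |φ a| + |φ l.prod| + D := this
      _ ≤ D + 2 * D * l.length + D := by gcongr
      _ ≤ 2 * D * (l.length + 1) := by nlinarith [Nat.cast_nonneg (α := ℝ) l.length]

lemma comm_rep {g : G} (hg : g ∈ commutator G) :
    ∃ l : List (G × G), g = (l.map fun p => ⁅p.1, p.2⁆).prod := by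
  rw [commutator_eq_closure] at hg
  induction hg using Subgroup.closure_induction with
  | mem x hx =>
    obtain ⟨a, b, rfl⟩ := hx
    exact ⟨[(a, b)], by simp⟩
  | one => exact ⟨[], by simp⟩
  | mul x y hx hy ihx ihy =>
    obtain ⟨l1, rfl⟩ := ihx
    obtain ⟨l2, rfl⟩ := ihy
    exact ⟨l1 ++ l2, by simp⟩
  | inv x hx ih =>
    obtain ⟨l, rfl⟩ := ih
    refine ⟨(l.map fun p => (p.2, p.1)).reverse, ?_⟩
    rw [List.prod_inv_reverse]
    simp [List.map_map, Function.comp_def, commutatorElement_inv]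

lemma clength_spec {g : G} (hg : g ∈ commutator G) :
    ∃ a b : Fin (clength g) → G,
      g = (List.ofFn (fun i => ⁅a i, b i⁆)).prod := by
  have hne : {n : ℕ | ∃ a b : Fin n → G, g = (List.ofFn (fun i => ⁅a i, b i⁆)).prod}.Nonempty := by
    obtain ⟨l, rfl⟩ := comm_rep hg
    refine ⟨l.length, fun i => (l.get i).1, fun i => (l.get i).2, ?_⟩
    have : (List.ofFn fun i => ⁅(l.get i).1, (l.get i).2⁆)
        = List.map (fun p => ⁅p.1, p.2⁆) (List.ofFn l.get) := by
      rw [List.map_ofFn]; rfl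
    rw [this, List.ofFn_get]
  exact Nat.sInf_mem hne

lemma cl_bound (hpos : 0 < D)
    (hD : ∀ f g : G, |φ (f * g) - φ f - φ g| ≤ D)
    (hhom : ∀ (g : G) (n : ℤ), φ (g ^ n) = n * φ g)
    {g : G} (hg : g ∈ commutator G) : |φ g| ≤ 2 * D * clength g := by
  obtain ⟨a, b, hab⟩ := clength_spec hg
  have hmem : ∀ x ∈ List.ofFn (fun i => ⁅a i, b i⁆), |φ x| ≤ D := by
    intro x hx
    rw [List.mem_ofFn] at hx
    obtain ⟨i, rfl⟩ := hx
    exact phi_comm φ D hpos hD hhom _ _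
  have := phi_prod φ D hpos hD hhom (List.ofFn fun i => ⁅a i, b i⁆) hmem
  rw [List.length_ofFn] at this
  rwa [← hab] at this

end Aux

/-- Bavard-type inequality: a homogeneous quasimorphism `φ` with defect at most
`D > 0` satisfies `|φ g| ≤ 2 D · cl(g)` for `g ∈ [G,G]`, and consequently
`|φ g| ≤ 2 D · scl(g)`. -/
theorem homogeneous_quasimorphism_cl_bound {G : Type*} [Group G]
    (φ : G → ℝ) (D : ℝ) (hpos : 0 < D)
    (hD : ∀ f g : G, |φ (f * g) - φ f - φ g| ≤ D)
    (hhom : ∀ (g : G) (n : ℤ), φ (g ^ n) = n * φ g)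
    (g : G) (hg : g ∈ commutator G) :
    |φ g| ≤ 2 * D * clength g ∧
    ∀ L : ℝ, Tendsto (fun n : ℕ => (clength (g ^ n) : ℝ) / n) atTop (nhds L) →
      |φ g| ≤ 2 * D * L := by
  refine ⟨cl_bound φ D hpos hD hhom hg, ?_⟩
  intro L hL
  have hL' : Tendsto (fun n : ℕ => 2 * D * ((clength (g ^ n) : ℝ) / n)) atTop
      (nhds (2 * D * L)) := hL.const_mul _
  refine ge_of_tendsto hL' ?_
  filter_upwards [eventually_ge_atTop 1] with n hn
  have hgn : g ^ n ∈ commutator G := pow_mem hg n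
  have h1 : |φ (g ^ n)| ≤ 2 * D * clength (g ^ n) := cl_bound φ D hpos hD hhom hgn
  have h2 : φ (g ^ n) = n * φ g := by have := hhom g n; simpa using this
  rw [h2, abs_mul, Nat.abs_cast] at h1
  have hn' : (0 : ℝ) < n := by exact_mod_cast hn
  rw [mul_div_assoc']
  rw [le_div_iff₀ hn']
  linarith [h1]
end
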